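/- Under the hypotheses of the previous theorem (D compact, D = closure(D°), μ_d(∂D) = 0, {f₁,…,f_k} a non-overlapping inside family of injective contractions whose attractor E has μ_d(E) = 0), the generator of the dissection of D is unique: if X and Z are both compact sets equal to the closures of their interiors generating dissections of D, then X = Z. -/

import Mathlib

open MeasureTheory

/-! ### Auxiliary lemmas -/

/-- A Lipschitz map of Euclidean space sends null sets to null sets. -/
theorem aux_np_lemma {d : ℕ} {K : NNReal}
    {g : EuclideanSpace ℝ (Fin d) → EuclideanSpace ℝ (Fin d)}
    (hg : LipschitzWith K g) {A : Set (EuclideanSpace ℝ (Fin d))} (hA : volume A = 0) :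
    volume (g '' A) = 0 := by
  have hd : (d:ℝ) = Module.finrank ℝ (EuclideanSpace ℝ (Fin d)) := by simp
  have hH : Measure.IsAddHaarMeasure (μH[d] : Measure (EuclideanSpace ℝ (Fin d))) := by
    rw [hd]; infer_instance
  have h1 : (volume : Measure (EuclideanSpace ℝ (Fin d))) =
      Measure.addHaarScalarFactor volume (μH[d]) • (μH[d]) :=
    Measure.isAddLeftInvariant_eq_smul _ _
  have hμH : μH[(d:ℝ)] A = 0 := by
    by_contra h
    have := h1 ▸ hA
    rw [Measure.smul_apply, ENNReal.smul_def, smul_eq_mul, mul_eq_zero] at this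
    rcases this with h0 | h0
    · exact (Measure.addHaarScalarFactor_pos_of_isAddHaarMeasure (volume) (μH[d])).ne'
        (by exact_mod_cast h0)
    · exact h h0
  have h2 := hg.hausdorffMeasure_image_le (by positivity : (0:ℝ) ≤ d) A
  rw [hμH, mul_zero] at h2
  have h3 : μH[(d:ℝ)] (g '' A) = 0 := le_antisymm h2 zero_le
  rw [h1]
  simp [Measure.smul_apply, h3]

theorem aux_sum_cons {n k : ℕ} (g : (Fin (n+1) → Fin k) → ENNReal) :
    ∑ w : Fin (n+1) → Fin k, g w = ∑ i : Fin k, ∑ w : Fin n → Fin k, g (Fin.cons i w) := by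
  rw [← Fintype.sum_prod_type']
  exact (Fintype.sum_equiv (Fin.consEquiv (fun _ => Fin k)) _ _ (fun p => rfl)).symm

/-- Composition of the maps `f (w 0), f (w 1), ...` along a word, innermost letter first:
`compWord f w = f (w (n-1)) ∘ ... ∘ f (w 0)` -/
def compWord {k : ℕ} {α : Type*} (f : Fin k → α → α) : ∀ {n : ℕ}, (Fin n → Fin k) → α → α
  | 0, _ => id
  | _+1, w => compWord f (Fin.tail w) ∘ f (w 0)

theorem compWord_succ {k n : ℕ} {α : Type*} (f : Fin k → α → α) (w : Fin (n+1) → Fin k) :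
    compWord f w = compWord f (Fin.tail w) ∘ f (w 0) := rfl

theorem compWord_cons {k n : ℕ} {α : Type*} (f : Fin k → α → α) (i : Fin k) (w : Fin n → Fin k) :
    compWord f (Fin.cons i w) = compWord f w ∘ f i := by
  simp only [compWord, Fin.tail_cons, Fin.cons_zero]

/-- Measure of a finite a.e.-disjoint union. -/
theorem aux_meas_union_add {α : Type*} [MeasurableSpace α] {μ : Measure α} {k : ℕ}
    {A : Set α} {B : Fin k → Set α}
    (hBm : ∀ i, NullMeasurableSet (B i) μ)
    (hAB : ∀ i, μ (A ∩ B i) = 0) (hBB : ∀ i j, i ≠ j → μ (B i ∩ B j) = 0) :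
    μ (A ∪ ⋃ i, B i) = μ A + ∑ i, μ (B i) := by
  have hd : AEDisjoint μ A (⋃ i, B i) := by
    have : A ∩ ⋃ i, B i = ⋃ i, A ∩ B i := Set.inter_iUnion _ _
    show μ (A ∩ ⋃ i, B i) = 0
    rw [this]
    exact measure_iUnion_null fun i => hAB i
  rw [measure_union₀ (NullMeasurableSet.iUnion hBm) hd]
  congr 1
  rw [measure_iUnion₀ (fun i j hij => hBB i j hij) hBm, tsum_fintype]

/-- For a non-overlapping inside family of injective contractions whose attractor `E`
has measure zero, the generator of a dissection of `D` is unique. -/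
theorem generator_of_dissection_unique {d k : ℕ}
    (D : Set (EuclideanSpace ℝ (Fin d))) (hDc : IsCompact D)
    (hDcl : D = closure (interior D)) (hfr : volume (frontier D) = 0)
    (f : Fin k → EuclideanSpace ℝ (Fin d) → EuclideanSpace ℝ (Fin d))
    (r : Fin k → NNReal) (hf : ∀ i, ContractingWith (r i) (f i))
    (hinj : ∀ i, Function.Injective (f i))
    (hin : ∀ i, f i '' D ⊆ D)
    (hnov : ∀ i j, i ≠ j → volume (f i '' D ∩ f j '' D) = 0)
    (E : Set (EuclideanSpace ℝ (Fin d))) (hE : E.Nonempty) (hEc : IsCompact E)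
    (hEfix : E = ⋃ i, f i '' E) (hEvol : volume E = 0)
    (X Z : Set (EuclideanSpace ℝ (Fin d)))
    (hXc : IsCompact X) (hXcl : X = closure (interior X))
    (hXcover : D = X ∪ ⋃ i, f i '' X)
    (hXfi : ∀ i, volume (X ∩ f i '' X) = 0)
    (hXfifj : ∀ i j, i ≠ j → volume (f i '' X ∩ f j '' X) = 0)
    (hZc : IsCompact Z) (hZcl : Z = closure (interior Z))
    (hZcover : D = Z ∪ ⋃ i, f i '' Z)
    (hZfi : ∀ i, volume (Z ∩ f i '' Z) = 0)
    (hZfifj : ∀ i j, i ≠ j → volume (f i '' Z ∩ f j '' Z) = 0) :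
    X = Z := by
  -- basic facts about compWord
  have hFinj : ∀ (n : ℕ) (w : Fin n → Fin k), Function.Injective (compWord f w) := by
    intro n
    induction n with
    | zero => intro w; exact fun a b h => h
    | succ n ih =>
      intro w
      rw [compWord_succ]
      exact (ih (Fin.tail w)).comp (hinj (w 0))
  have hFcont : ∀ (n : ℕ) (w : Fin n → Fin k), Continuous (compWord f w) := by
    intro n
    induction n with
    | zero => intro w; exact continuous_id
    | succ n ih =>
      intro w
      rw [compWord_succ]
      exact (ih (Fin.tail w)).comp (hf (w 0)).2.continuous
  have hFnp : ∀ (n : ℕ) (w : Fin n → Fin k) (A : Set (EuclideanSpace ℝ (Fin d))),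
      volume A = 0 → volume (compWord f w '' A) = 0 := by
    intro n
    induction n with
    | zero => intro w A hA; simpa [compWord] using hA
    | succ n ih =>
      intro w A hA
      rw [compWord_succ, Set.image_comp]
      exact ih (Fin.tail w) _ (aux_np_lemma (hf (w 0)).2 hA)
  have hFD : ∀ (n : ℕ) (w : Fin n → Fin k), compWord f w '' D ⊆ D := by
    intro n
    induction n with
    | zero => intro w; simp [compWord]
    | succ n ih =>
      intro w
      rw [compWord_succ, Set.image_comp]
      exact (Set.image_mono (hin (w 0))).trans (ih (Fin.tail w))
  have hXsub : X ⊆ D := hXcover ▸ Set.subset_union_left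
  have hZsub : Z ⊆ D := hZcover ▸ Set.subset_union_left
  -- words of the same length have a.e. disjoint images of D
  have hword : ∀ (n : ℕ) (w v : Fin n → Fin k), w ≠ v →
      volume (compWord f w '' D ∩ compWord f v '' D) = 0 := by
    intro n
    induction n with
    | zero => intro w v hwv; exact absurd (Subsingleton.elim w v) hwv
    | succ n ih =>
      intro w v hwv
      by_cases htv : Fin.tail w = Fin.tail v
      · have hij : w 0 ≠ v 0 := by
          intro h0
          apply hwv
          rw [← Fin.cons_self_tail w, ← Fin.cons_self_tail v, h0, htv]
        rw [compWord_succ, compWord_succ, Set.image_comp, Set.image_comp, htv,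
          ← Set.image_inter (hFinj n (Fin.tail v))]
        exact hFnp n (Fin.tail v) _ (hnov _ _ hij)
      · have h1 : compWord f w '' D ⊆ compWord f (Fin.tail w) '' D := by
          rw [compWord_succ, Set.image_comp]
          exact Set.image_mono (hin (w 0))
        have h2 : compWord f v '' D ⊆ compWord f (Fin.tail v) '' D := by
          rw [compWord_succ, Set.image_comp]
          exact Set.image_mono (hin (v 0))
        exact measure_mono_null (Set.inter_subset_inter h1 h2) (ih _ _ htv)
  -- the dissection identity pushed by any word
  have keyA : ∀ (Y : Set (EuclideanSpace ℝ (Fin d))), IsCompact Y → D = Y ∪ ⋃ i, f i '' Y →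
      (∀ i, volume (Y ∩ f i '' Y) = 0) →
      (∀ i j, i ≠ j → volume (f i '' Y ∩ f j '' Y) = 0) →
      ∀ (n : ℕ) (w : Fin n → Fin k),
        volume (compWord f w '' D) =
          volume (compWord f w '' Y) + ∑ i, volume (compWord f w '' (f i '' Y)) := by
    intro Y hYc hYcov hY1 hY2 n w
    have himg : compWord f w '' D =
        compWord f w '' Y ∪ ⋃ i, compWord f w '' (f i '' Y) := by
      conv_lhs => rw [hYcov]
      rw [Set.image_union, Set.image_iUnion]
    rw [himg]
    apply aux_meas_union_add
    · intro i
      exact (((hYc.image (hf i).2.continuous).image (hFcont n w)).isClosed.measurableSet).nullMeasurableSet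
    · intro i
      rw [← Set.image_inter (hFinj n w)]
      exact hFnp n w _ (hY1 i)
    · intro i j hij
      rw [← Set.image_inter (hFinj n w)]
      exact hFnp n w _ (hY2 i j hij)
  -- the mixed identity pushed by any word
  have keyB : ∀ (n : ℕ) (w : Fin n → Fin k),
      volume (compWord f w '' D) + volume (compWord f w '' (X ∩ Z)) =
        volume (compWord f w '' X) + volume (compWord f w '' Z)
          + ∑ i, volume (compWord f w '' (f i '' (X ∩ Z))) := by
    intro n w
    set g := compWord f w with hg
    have hXZc : IsCompact (X ∩ Z) := hXc.inter_right hZc.isClosed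
    have hU : volume (g '' (X ∪ Z) ∪ ⋃ i, g '' (f i '' (X ∩ Z))) =
        volume (g '' (X ∪ Z)) + ∑ i, volume (g '' (f i '' (X ∩ Z))) := by
      apply aux_meas_union_add
      · intro i
        exact (((hXZc.image (hf i).2.continuous).image (hFcont n w)).isClosed.measurableSet).nullMeasurableSet
      · intro i
        rw [← Set.image_inter (hFinj n w)]
        apply hFnp n w
        have hsub : (X ∪ Z) ∩ f i '' (X ∩ Z) ⊆ (X ∩ f i '' X) ∪ (Z ∩ f i '' Z) := by
          rintro u ⟨hu1, hu2⟩
          have huX : u ∈ f i '' X := Set.image_mono Set.inter_subset_left hu2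
          have huZ : u ∈ f i '' Z := Set.image_mono Set.inter_subset_right hu2
          rcases hu1 with h | h
          · exact Or.inl ⟨h, huX⟩
          · exact Or.inr ⟨h, huZ⟩
        exact measure_mono_null hsub (measure_union_null (hXfi i) (hZfi i))
      · intro i j hij
        rw [← Set.image_inter (hFinj n w)]
        apply hFnp n w
        have hsub : f i '' (X ∩ Z) ∩ f j '' (X ∩ Z) ⊆ f i '' D ∩ f j '' D :=
          Set.inter_subset_inter (Set.image_mono (Set.inter_subset_left.trans hXsub))
            (Set.image_mono (Set.inter_subset_left.trans hXsub))
        exact measure_mono_null hsub (hnov i j hij)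
    -- the union equals g '' D up to null sets
    have hNnull : volume (⋃ i, ⋃ j, ⋃ (_ : i ≠ j), (f i '' D ∩ f j '' D)) = 0 :=
      measure_iUnion_null fun i => measure_iUnion_null fun j =>
        measure_iUnion_null fun hij => hnov i j hij
    have hcov : D ⊆ ((X ∪ Z) ∪ ⋃ i, f i '' (X ∩ Z)) ∪
        ⋃ i, ⋃ j, ⋃ (_ : i ≠ j), (f i '' D ∩ f j '' D) := by
      intro u hu
      by_cases huX : u ∈ X
      · exact Or.inl (Or.inl (Or.inl huX))
      by_cases huZ : u ∈ Z
      · exact Or.inl (Or.inl (Or.inr huZ))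
      have h1 : u ∈ ⋃ i, f i '' X := by
        rcases (hXcover ▸ hu : u ∈ X ∪ ⋃ i, f i '' X) with h | h
        · exact absurd h huX
        · exact h
      have h2 : u ∈ ⋃ i, f i '' Z := by
        rcases (hZcover ▸ hu : u ∈ Z ∪ ⋃ i, f i '' Z) with h | h
        · exact absurd h huZ
        · exact h
      obtain ⟨i, hi⟩ := Set.mem_iUnion.mp h1
      obtain ⟨j, hj⟩ := Set.mem_iUnion.mp h2
      by_cases hij : i = j
      · subst hij
        refine Or.inl (Or.inr (Set.mem_iUnion.mpr ⟨i, ?_⟩))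
        rw [Set.image_inter (hinj i)]
        exact ⟨hi, hj⟩
      · refine Or.inr (Set.mem_iUnion.mpr ⟨i, Set.mem_iUnion.mpr ⟨j, Set.mem_iUnion.mpr ⟨hij, ?_⟩⟩⟩)
        exact ⟨Set.image_mono hXsub hi, Set.image_mono hZsub hj⟩
    have hDeq : volume (g '' D) = volume (g '' (X ∪ Z)) + ∑ i, volume (g '' (f i '' (X ∩ Z))) := by
      rw [← hU]
      apply le_antisymm
      · calc volume (g '' D)
            ≤ volume ((g '' (X ∪ Z) ∪ ⋃ i, g '' (f i '' (X ∩ Z))) ∪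
              g '' (⋃ i, ⋃ j, ⋃ (_ : i ≠ j), (f i '' D ∩ f j '' D))) := by
              apply measure_mono
              intro u hu
              obtain ⟨a, ha, rfl⟩ := hu
              rcases hcov ha with (h | h) | h
              · exact Or.inl (Or.inl (Set.mem_image_of_mem _ h))
              · obtain ⟨i, hi⟩ := Set.mem_iUnion.mp h
                exact Or.inl (Or.inr (Set.mem_iUnion.mpr ⟨i, Set.mem_image_of_mem _ hi⟩))
              · exact Or.inr (Set.mem_image_of_mem _ h)
          _ ≤ volume (g '' (X ∪ Z) ∪ ⋃ i, g '' (f i '' (X ∩ Z))) +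
              volume (g '' (⋃ i, ⋃ j, ⋃ (_ : i ≠ j), (f i '' D ∩ f j '' D))) := measure_union_le _ _
          _ = volume (g '' (X ∪ Z) ∪ ⋃ i, g '' (f i '' (X ∩ Z))) := by
              rw [hFnp n w _ hNnull, add_zero]
      · apply measure_mono
        apply Set.union_subset
        · exact Set.image_mono (Set.union_subset hXsub hZsub)
        · exact Set.iUnion_subset fun i =>
            Set.image_mono ((Set.image_mono (Set.inter_subset_left.trans hXsub)).trans (hin i))
    have hIE : volume (g '' (X ∪ Z)) + volume (g '' (X ∩ Z)) =
        volume (g '' X) + volume (g '' Z) := by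
      rw [Set.image_union, Set.image_inter (hFinj n w)]
      exact measure_union_add_inter _ ((hZc.image (hFcont n w)).isClosed.measurableSet)
    calc volume (g '' D) + volume (g '' (X ∩ Z))
        = (volume (g '' (X ∪ Z)) + volume (g '' (X ∩ Z)))
            + ∑ i, volume (g '' (f i '' (X ∩ Z))) := by rw [hDeq]; ring
      _ = volume (g '' X) + volume (g '' Z) + ∑ i, volume (g '' (f i '' (X ∩ Z))) := by rw [hIE]
  -- level sums
  set Sq : Set (EuclideanSpace ℝ (Fin d)) → ℕ → ENNReal :=
    fun A n => ∑ w : Fin n → Fin k, volume (compWord f w '' A) with hSq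
  have hsum_succ : ∀ (A : Set (EuclideanSpace ℝ (Fin d))) (n : ℕ),
      Sq A (n+1) = ∑ w : Fin n → Fin k, ∑ i, volume (compWord f w '' (f i '' A)) := by
    intro A n
    simp only [hSq]
    rw [aux_sum_cons (fun w => volume (compWord f w '' A)), Finset.sum_comm]
    refine Finset.sum_congr rfl fun w _ => Finset.sum_congr rfl fun i _ => ?_
    rw [compWord_cons, Set.image_comp]
  have hbx : ∀ n, Sq D n = Sq X n + Sq X (n+1) := by
    intro n
    rw [hsum_succ, hSq]
    simp only
    rw [← Finset.sum_add_distrib]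
    exact Finset.sum_congr rfl fun w _ => keyA X hXc hXcover hXfi hXfifj n w
  have hbz : ∀ n, Sq D n = Sq Z n + Sq Z (n+1) := by
    intro n
    rw [hsum_succ, hSq]
    simp only
    rw [← Finset.sum_add_distrib]
    exact Finset.sum_congr rfl fun w _ => keyA Z hZc hZcover hZfi hZfifj n w
  have hbs : ∀ n, Sq D n + Sq (X ∩ Z) n = Sq X n + Sq Z n + Sq (X ∩ Z) (n+1) := by
    intro n
    rw [hsum_succ, hSq]
    simp only
    rw [← Finset.sum_add_distrib, ← Finset.sum_add_distrib, ← Finset.sum_add_distrib]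
    exact Finset.sum_congr rfl fun w _ => keyB n w
  have hmono : ∀ (A B : Set (EuclideanSpace ℝ (Fin d))), A ⊆ B → ∀ n, Sq A n ≤ Sq B n := by
    intro A B hAB n
    exact Finset.sum_le_sum fun w _ => measure_mono (Set.image_mono hAB)
  have hfinD : ∀ n, Sq D n ≠ ⊤ := by
    intro n
    refine (ENNReal.sum_lt_top.mpr fun w _ => ?_).ne
    exact lt_of_le_of_lt (measure_mono (hFD n w)) hDc.measure_lt_top
  have hfin : ∀ (A : Set (EuclideanSpace ℝ (Fin d))), A ⊆ D → ∀ n, Sq A n ≠ ⊤ :=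
    fun A hA n => (lt_of_le_of_lt (hmono A D hA n) (hfinD n).lt_top).ne
  -- Sq D n → 0
  set ρ : NNReal := Finset.univ.sup r with hρdef
  have hρlt : (ρ : ℝ) < 1 := by
    have : ρ < 1 := (Finset.sup_lt_iff (show (⊥ : NNReal) < 1 by norm_num)).mpr
      fun i _ => (hf i).1
    exact_mod_cast this
  have hρ0 : (0:ℝ) ≤ (ρ : ℝ) := ρ.coe_nonneg
  obtain ⟨e₀, he₀⟩ := hE
  obtain ⟨R₀, hR₀⟩ := hDc.isBounded.subset_closedBall e₀
  set R : ℝ := max R₀ 0 with hRdef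
  have hR0 : (0:ℝ) ≤ R := le_max_right _ _
  have hthick : ∀ (n : ℕ) (w : Fin n → Fin k) (a : EuclideanSpace ℝ (Fin d)) (t : ℝ), 0 ≤ t →
      (∃ e ∈ E, dist a e ≤ t) → ∃ e ∈ E, dist (compWord f w a) e ≤ (ρ:ℝ)^n * t := by
    intro n
    induction n with
    | zero =>
      rintro w a t ht ⟨e, he, hd⟩
      exact ⟨e, he, by simpa [compWord] using hd⟩
    | succ n ih =>
      rintro w a t ht ⟨e, he, hd⟩
      have hfe : f (w 0) e ∈ E := by
        rw [hEfix]
        exact Set.mem_iUnion.mpr ⟨w 0, Set.mem_image_of_mem _ he⟩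
      have hd2 : dist (f (w 0) a) (f (w 0) e) ≤ (ρ:ℝ) * t := by
        calc dist (f (w 0) a) (f (w 0) e) ≤ (r (w 0) : ℝ) * dist a e :=
              (hf (w 0)).2.dist_le_mul a e
          _ ≤ (ρ:ℝ) * t := by
              apply mul_le_mul _ hd dist_nonneg hρ0
              exact_mod_cast Finset.le_sup (Finset.mem_univ (w 0))
      obtain ⟨e', he', hd'⟩ := ih (Fin.tail w) (f (w 0) a) ((ρ:ℝ) * t)
        (mul_nonneg hρ0 ht) ⟨f (w 0) e, hfe, hd2⟩
      refine ⟨e', he', ?_⟩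
      rw [compWord_succ]
      calc dist (compWord f (Fin.tail w) (f (w 0) a)) e' ≤ (ρ:ℝ)^n * ((ρ:ℝ) * t) := hd'
        _ = (ρ:ℝ)^(n+1) * t := by ring
  have hTn : ∀ (n : ℕ) (w : Fin n → Fin k),
      compWord f w '' D ⊆ Metric.cthickening ((ρ:ℝ)^n * R) E := by
    rintro n w _ ⟨a, ha, rfl⟩
    obtain ⟨e, he, hd⟩ := hthick n w a R hR0
      ⟨e₀, he₀, le_trans (by simpa [dist_comm] using hR₀ ha) (le_max_left _ _)⟩
    exact Metric.mem_cthickening_of_dist_le _ _ _ _ he hd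
  have hble : ∀ n, Sq D n ≤ volume (Metric.cthickening ((ρ:ℝ)^n * R) E) := by
    intro n
    have hU : Sq D n = volume (⋃ w : Fin n → Fin k, compWord f w '' D) := by
      simp only [hSq]
      rw [measure_iUnion₀ (fun w v hwv => hword n w v hwv)
        (fun w => ((hDc.image (hFcont n w)).isClosed.measurableSet).nullMeasurableSet),
        tsum_fintype]
    rw [hU]
    exact measure_mono (Set.iUnion_subset (hTn n))
  have hb0 : Filter.Tendsto (fun n => Sq D n) Filter.atTop (nhds 0) := by
    have h1 : Filter.Tendsto (fun n : ℕ => (ρ:ℝ)^n * R) Filter.atTop (nhds 0) := by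
      have := (tendsto_pow_atTop_nhds_zero_of_lt_one hρ0 hρlt).mul_const R
      simpa using this
    have h2 := tendsto_measure_cthickening_of_isCompact (μ := volume) hEc
    rw [hEvol] at h2
    have h3 : Filter.Tendsto (fun n : ℕ => volume (Metric.cthickening ((ρ:ℝ)^n * R) E))
        Filter.atTop (nhds 0) := h2.comp h1
    exact tendsto_of_tendsto_of_tendsto_of_le_of_le tendsto_const_nhds h3
      (fun n => zero_le) hble
  -- the invariant
  have hcancel : ∀ (a b c : ENNReal), c ≠ ⊤ → a + c = b + c → a = b := by
    intro a b c hc h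
    rwa [ENNReal.add_left_inj hc] at h
  have hInv : ∀ n, (Sq X 0 + Sq Z 0) + 2 * Sq (X ∩ Z) n
      = (Sq X n + Sq Z n) + 2 * Sq (X ∩ Z) 0 := by
    intro n
    induction n with
    | zero => ring
    | succ n ih =>
      have hfe : Sq X n + Sq Z n ≠ ⊤ := by
        refine ENNReal.add_ne_top.mpr ⟨hfin X hXsub n, hfin Z hZsub n⟩
      -- step identity : (x' + z') + 2 * s n = (x n + z n) + 2 * s (n+1)
      have hstep : (Sq X (n+1) + Sq Z (n+1)) + 2 * Sq (X ∩ Z) n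
          = (Sq X n + Sq Z n) + 2 * Sq (X ∩ Z) (n+1) := by
        apply hcancel _ _ (Sq X n + Sq Z n) hfe
        have h2bs : 2 * (Sq D n + Sq (X ∩ Z) n)
            = 2 * ((Sq X n + Sq Z n) + Sq (X ∩ Z) (n+1)) := by rw [hbs n]
        have h2b : Sq D n + Sq D n = (Sq X n + Sq Z n) + (Sq X (n+1) + Sq Z (n+1)) := by
          nth_rewrite 1 [hbx n]
          nth_rewrite 1 [hbz n]
          ring
        calc (Sq X (n+1) + Sq Z (n+1)) + 2 * Sq (X ∩ Z) n + (Sq X n + Sq Z n)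
            = (Sq D n + Sq D n) + 2 * Sq (X ∩ Z) n := by rw [h2b]; ring
          _ = 2 * (Sq D n + Sq (X ∩ Z) n) := by ring
          _ = 2 * ((Sq X n + Sq Z n) + Sq (X ∩ Z) (n+1)) := h2bs
          _ = (Sq X n + Sq Z n) + 2 * Sq (X ∩ Z) (n+1) + (Sq X n + Sq Z n) := by ring
      apply hcancel _ _ ((Sq X n + Sq Z n) + 2 * Sq (X ∩ Z) n)
        (ENNReal.add_ne_top.mpr ⟨hfe, ENNReal.mul_ne_top (by norm_num)
          (hfin _ (Set.inter_subset_left.trans hXsub) n)⟩)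
      calc (Sq X 0 + Sq Z 0) + 2 * Sq (X ∩ Z) (n+1) + ((Sq X n + Sq Z n) + 2 * Sq (X ∩ Z) n)
          = ((Sq X 0 + Sq Z 0) + 2 * Sq (X ∩ Z) n)
            + ((Sq X n + Sq Z n) + 2 * Sq (X ∩ Z) (n+1)) := by ring
        _ = ((Sq X n + Sq Z n) + 2 * Sq (X ∩ Z) 0)
            + ((Sq X (n+1) + Sq Z (n+1)) + 2 * Sq (X ∩ Z) n) := by rw [ih, hstep]
        _ = (Sq X (n+1) + Sq Z (n+1)) + 2 * Sq (X ∩ Z) 0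
            + ((Sq X n + Sq Z n) + 2 * Sq (X ∩ Z) n) := by ring
  -- pass to the limit
  have hub : ∀ n, (Sq X 0 + Sq Z 0) ≤ 2 * Sq D n + 2 * Sq (X ∩ Z) 0 := by
    intro n
    calc Sq X 0 + Sq Z 0 ≤ (Sq X 0 + Sq Z 0) + 2 * Sq (X ∩ Z) n := le_self_add
      _ = (Sq X n + Sq Z n) + 2 * Sq (X ∩ Z) 0 := hInv n
      _ ≤ 2 * Sq D n + 2 * Sq (X ∩ Z) 0 := by
          apply add_le_add_left
          calc Sq X n + Sq Z n ≤ Sq D n + Sq D n :=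
                add_le_add ((hbx n).symm ▸ le_self_add) ((hbz n).symm ▸ le_self_add)
            _ = 2 * Sq D n := by ring
  have hlim : (Sq X 0 + Sq Z 0) ≤ 2 * Sq (X ∩ Z) 0 := by
    have h1 : Filter.Tendsto (fun n => 2 * Sq D n + 2 * Sq (X ∩ Z) 0) Filter.atTop
        (nhds (2 * (0:ENNReal) + 2 * Sq (X ∩ Z) 0)) := by
      exact ((ENNReal.Tendsto.const_mul hb0 (Or.inr (by norm_num))).add_const _)
    rw [mul_zero, zero_add] at h1
    exact ge_of_tendsto' h1 hub
  -- convert Sq _ 0 to measures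
  have hSq0 : ∀ A : Set (EuclideanSpace ℝ (Fin d)), Sq A 0 = volume A := by
    intro A
    simp [hSq, compWord]
  rw [hSq0, hSq0, hSq0] at hlim
  -- deduce volume (X \ Z) = 0 and volume (Z \ X) = 0
  have hXZfin : volume (X ∩ Z) ≠ ⊤ :=
    (lt_of_le_of_lt (measure_mono Set.inter_subset_left) hXc.measure_lt_top).ne
  have hXfin : volume X ≠ ⊤ := hXc.measure_lt_top.ne
  have hZfin : volume Z ≠ ⊤ := hZc.measure_lt_top.ne
  have hXle : volume X ≤ volume (X ∩ Z) := by
    have : volume X + volume Z ≤ volume (X ∩ Z) + volume Z := by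
      calc volume X + volume Z ≤ 2 * volume (X ∩ Z) := hlim
        _ = volume (X ∩ Z) + volume (X ∩ Z) := by ring
        _ ≤ volume (X ∩ Z) + volume Z :=
            add_le_add_right (measure_mono Set.inter_subset_right) _
    exact (ENNReal.add_le_add_iff_right hZfin).mp this
  have hZle : volume Z ≤ volume (X ∩ Z) := by
    have : volume Z + volume X ≤ volume (X ∩ Z) + volume X := by
      calc volume Z + volume X = volume X + volume Z := by ring
        _ ≤ 2 * volume (X ∩ Z) := hlim
        _ = volume (X ∩ Z) + volume (X ∩ Z) := by ring
        _ ≤ volume (X ∩ Z) + volume X :=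
            add_le_add_right (measure_mono Set.inter_subset_left) _
    exact (ENNReal.add_le_add_iff_right hXfin).mp this
  have hXeq : volume (X ∩ Z) = volume X :=
    le_antisymm (measure_mono Set.inter_subset_left) hXle
  have hZeq : volume (X ∩ Z) = volume Z :=
    le_antisymm (measure_mono Set.inter_subset_right) hZle
  have hXdiff : volume (X \ Z) = 0 := by
    have h := measure_inter_add_diff (μ := volume) X (hZc.isClosed.measurableSet)
    rw [hXeq.symm] at h
    nth_rewrite 2 [← add_zero (volume (X ∩ Z))] at h
    exact ((ENNReal.add_right_inj hXZfin).mp h)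
  have hZdiff : volume (Z \ X) = 0 := by
    have h := measure_inter_add_diff (μ := volume) Z (hXc.isClosed.measurableSet)
    rw [Set.inter_comm] at h
    rw [hZeq.symm] at h
    nth_rewrite 2 [← add_zero (volume (X ∩ Z))] at h
    exact ((ENNReal.add_right_inj hXZfin).mp h)
  -- conclude using regular-closedness
  have hsub : ∀ (P Q : Set (EuclideanSpace ℝ (Fin d))), P = closure (interior P) → IsClosed Q →
      volume (P \ Q) = 0 → P ⊆ Q := by
    intro P Q hP hQ h0
    have hio : interior P ⊆ Q := by
      intro u hu
      by_contra hq
      have hopen : IsOpen (interior P ∩ Qᶜ) := isOpen_interior.inter hQ.isOpen_compl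
      have hne : (interior P ∩ Qᶜ).Nonempty := ⟨u, hu, hq⟩
      have hpos := hopen.measure_pos volume hne
      have hss : interior P ∩ Qᶜ ⊆ P \ Q := fun y hy => ⟨interior_subset hy.1, hy.2⟩
      exact absurd (measure_mono_null hss h0) hpos.ne'
    calc P = closure (interior P) := hP
      _ ⊆ closure Q := closure_mono hio
      _ = Q := hQ.closure_eq
  have hZclosed : IsClosed Z := hZc.isClosed
  have hXclosed : IsClosed X := hXc.isClosed
  exact Set.Subset.antisymm (hsub X Z hXcl hZclosed hXdiff) (hsub Z X hZcl hXclosed hZdiff)
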